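/- arXiv:2006.12800 — 4 statements merged into one kernel-verified Lean document; each statement's English description precedes it below -/
import Mathlib

section
/- Let h(t) = P(Y = k ∧ Z ≤ s(t)) where s is the fractile function of Z (so P(Z ≤ s(t)) = t for all t), and suppose the conditional probability function g(z) = P(Y = k | Z = z) is continuous and s is differentiable. Then h is differentiable and h'(t) = P(Y = k | Z = s(t)). -/
open MeasureTheory Set

/-- If `h t = P(Y = k ∧ Z ≤ s t)` where `s` is the fractile function of `Z`
(so `P(Z ≤ s t) = t`), the conditional probability function
`g z = P(Y = k | Z = z)` is continuous (given as a density of the joint measure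
with respect to the law of `Z`) and `s` is differentiable, then `h` is
differentiable with `h' t = P(Y = k | Z = s t) = g (s t)`. -/
theorem stmt1 {Ω : Type*} [MeasurableSpace Ω] (P : Measure Ω) [IsProbabilityMeasure P]
    (Z : Ω → ℝ) (hZ : Measurable Z) (Y : Ω → ℕ) (hY : Measurable Y) (k : ℕ)
    (s : ℝ → ℝ) (hsd : Differentiable ℝ s)
    (hfrac : ∀ t ∈ Set.Icc (0 : ℝ) 1, (P {ω | Z ω ≤ s t}).toReal = t)
    (g : ℝ → ℝ) (hgc : Continuous g)
    (hg : ∀ A : Set ℝ, MeasurableSet A →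
      (P {ω | Y ω = k ∧ Z ω ∈ A}).toReal = ∫ z in A, g z ∂(P.map Z))
    (h : ℝ → ℝ) (hh : ∀ t, h t = (P {ω | Y ω = k ∧ Z ω ≤ s t}).toReal) :
    ∀ t ∈ Set.Ioo (0 : ℝ) 1, HasDerivAt h (g (s t)) t := by
  have hsc : Continuous s := hsd.continuous
  set μ := P.map Z with hμdef
  haveI : IsProbabilityMeasure μ := Measure.isProbabilityMeasure_map hZ.aemeasurable
  -- monotonicity of s on Icc 0 1
  have hmono : ∀ a ∈ Icc (0:ℝ) 1, ∀ b ∈ Icc (0:ℝ) 1, a ≤ b → s a ≤ s b := by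
    intro a ha b hb hab
    by_contra hlt
    push_neg at hlt
    have h1 : P {ω | Z ω ≤ s b} ≤ P {ω | Z ω ≤ s a} :=
      measure_mono (fun ω hω => le_trans hω hlt.le)
    have h2 : b ≤ a := by
      rw [← hfrac a ha, ← hfrac b hb]
      exact ENNReal.toReal_mono (measure_ne_top _ _) h1
    have hab' : a = b := le_antisymm hab h2
    rw [hab'] at hlt
    exact lt_irrefl _ hlt
  -- general toReal-diff helper
  have tdiff : ∀ A B : Set Ω, MeasurableSet A → A ⊆ B →
      (P (B \ A)).toReal = (P B).toReal - (P A).toReal := by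
    intro A B hA hsub
    rw [measure_diff hsub hA.nullMeasurableSet (measure_ne_top P A),
      ENNReal.toReal_sub_of_le (measure_mono hsub) (measure_ne_top P B)]
  -- measure of the slab
  have hslab : ∀ a ∈ Icc (0:ℝ) 1, ∀ b ∈ Icc (0:ℝ) 1, a ≤ b →
      (μ (Ioc (s a) (s b))).toReal = b - a := by
    intro a ha b hb hab
    have hmap : μ (Ioc (s a) (s b)) = P (Z ⁻¹' Ioc (s a) (s b)) :=
      Measure.map_apply hZ measurableSet_Ioc
    have hset : Z ⁻¹' Ioc (s a) (s b) = {ω | Z ω ≤ s b} \ {ω | Z ω ≤ s a} := by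
      ext ω; simp only [mem_preimage, mem_Ioc, mem_diff, mem_setOf_eq]
      constructor
      · rintro ⟨h1, h2⟩; exact ⟨h2, not_le.2 h1⟩
      · rintro ⟨h1, h2⟩; exact ⟨not_le.1 h2, h1⟩
    have hmeas : MeasurableSet {ω | Z ω ≤ s a} := hZ measurableSet_Iic
    rw [hmap, hset,
      tdiff {ω | Z ω ≤ s a} {ω | Z ω ≤ s b} hmeas
        (fun ω hω => le_trans hω (hmono a ha b hb hab)),
      hfrac a ha, hfrac b hb]
  -- increment of h
  have hinc : ∀ a ∈ Icc (0:ℝ) 1, ∀ b ∈ Icc (0:ℝ) 1, a ≤ b →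
      h b - h a = ∫ z in Ioc (s a) (s b), g z ∂μ := by
    intro a ha b hb hab
    have hYk : MeasurableSet {ω | Y ω = k} := hY (measurableSet_singleton k)
    have hA : MeasurableSet {ω | Y ω = k ∧ Z ω ≤ s a} :=
      hYk.inter (hZ measurableSet_Iic)
    have hsub : {ω | Y ω = k ∧ Z ω ≤ s a} ⊆ {ω | Y ω = k ∧ Z ω ≤ s b} :=
      fun ω hω => ⟨hω.1, le_trans hω.2 (hmono a ha b hb hab)⟩
    have hset : {ω | Y ω = k ∧ Z ω ≤ s b} \ {ω | Y ω = k ∧ Z ω ≤ s a}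
        = {ω | Y ω = k ∧ Z ω ∈ Ioc (s a) (s b)} := by
      ext ω
      simp only [mem_diff, mem_setOf_eq, mem_Ioc, not_and, not_le]
      constructor
      · rintro ⟨⟨h1, h2⟩, h3⟩; exact ⟨h1, h3 h1, h2⟩
      · rintro ⟨h1, h2, h3⟩; exact ⟨⟨h1, h3⟩, fun _ => h2⟩
    rw [hh a, hh b,
      ← tdiff {ω | Y ω = k ∧ Z ω ≤ s a} {ω | Y ω = k ∧ Z ω ≤ s b} hA hsub,
      hset, hg _ measurableSet_Ioc]
  -- the derivative
  intro t₀ ht₀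
  have ht₀m : t₀ ∈ Icc (0:ℝ) 1 := ⟨ht₀.1.le, ht₀.2.le⟩
  rw [hasDerivAt_iff_tendsto_slope, Metric.tendsto_nhdsWithin_nhds]
  intro ε hε
  obtain ⟨δ₁, hδ₁, hgδ⟩ := Metric.continuous_iff.1 hgc (s t₀) (ε/2) (by linarith)
  obtain ⟨δ₂, hδ₂, hsδ⟩ := Metric.continuous_iff.1 hsc t₀ δ₁ hδ₁
  refine ⟨min δ₂ (min t₀ (1 - t₀)),
    lt_min hδ₂ (lt_min ht₀.1 (by linarith [ht₀.2])), ?_⟩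
  intro t ht hdist
  have htδ₂ : dist t t₀ < δ₂ := lt_of_lt_of_le hdist (min_le_left _ _)
  have htmem : t ∈ Icc (0:ℝ) 1 := by
    have h1 : dist t t₀ < t₀ :=
      lt_of_lt_of_le hdist (le_trans (min_le_right _ _) (min_le_left _ _))
    have h2 : dist t t₀ < 1 - t₀ :=
      lt_of_lt_of_le hdist (le_trans (min_le_right _ _) (min_le_right _ _))
    rw [Real.dist_eq] at h1 h2
    rcases abs_lt.1 h1 with ⟨l1, r1⟩
    rcases abs_lt.1 h2 with ⟨l2, r2⟩
    exact ⟨by linarith, by linarith⟩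
  have htne : t ≠ t₀ := ht
  -- common estimate
  have est : ∀ a ∈ Icc (0:ℝ) 1, ∀ b ∈ Icc (0:ℝ) 1, a < b →
      (∀ x ∈ Ioc (s a) (s b), |g x - g (s t₀)| ≤ ε/2) →
      |(h b - h a) / (b - a) - g (s t₀)| ≤ ε/2 := by
    intro a ha b hb hab hbound
    have hba : (0:ℝ) < b - a := by linarith
    have hIoc : (μ (Ioc (s a) (s b))).toReal = b - a := hslab a ha b hb hab.le
    have hint : IntegrableOn (fun x => g x - g (s t₀)) (Ioc (s a) (s b)) μ :=
      (hgc.sub continuous_const).integrableOn_Ioc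
    have hnorm : ‖∫ x in Ioc (s a) (s b), (g x - g (s t₀)) ∂μ‖
        ≤ ε/2 * (μ (Ioc (s a) (s b))).toReal :=
      norm_setIntegral_le_of_norm_le_const (measure_lt_top _ _)
        (fun x hx => by simpa using hbound x hx)
    have hsplit : ∫ x in Ioc (s a) (s b), (g x - g (s t₀)) ∂μ
        = (∫ x in Ioc (s a) (s b), g x ∂μ) - g (s t₀) * (b - a) := by
      rw [integral_sub hgc.integrableOn_Ioc
        (integrableOn_const (measure_ne_top _ _))]
      rw [setIntegral_const, measureReal_def, hIoc, smul_eq_mul, mul_comm]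
    rw [hsplit, hIoc, Real.norm_eq_abs] at hnorm
    have heq : (h b - h a) / (b - a) - g (s t₀)
        = ((h b - h a) - g (s t₀) * (b - a)) / (b - a) := by
      field_simp
    rw [heq, abs_div, abs_of_pos hba, div_le_iff₀ hba, hinc a ha b hb hab.le]
    exact hnorm
  -- bound on g over the relevant interval
  have hst : |s t - s t₀| < δ₁ := by
    have := hsδ t htδ₂; rwa [Real.dist_eq] at this
  rcases abs_lt.1 hst with ⟨hstl, hstr⟩
  have hgb : ∀ x, min (s t) (s t₀) < x → x ≤ max (s t) (s t₀) → |g x - g (s t₀)| ≤ ε/2 := by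
    intro x hx1 hx2
    have hxd : |x - s t₀| < δ₁ := by
      rcases le_total (s t) (s t₀) with hc | hc
      · rw [min_eq_left hc] at hx1
        rw [max_eq_right hc] at hx2
        rw [abs_of_nonpos (by linarith)]; linarith
      · rw [min_eq_right hc] at hx1
        rw [max_eq_left hc] at hx2
        rw [abs_of_nonneg (by linarith)]; linarith
    have := hgδ x (by rwa [Real.dist_eq])
    rw [Real.dist_eq] at this
    linarith
  have hfinal : |(h t - h t₀) / (t - t₀) - g (s t₀)| ≤ ε/2 := by
    rcases lt_or_gt_of_ne htne with hlt | hgt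
    · -- t < t₀
      have hs' : s t ≤ s t₀ := hmono t htmem t₀ ht₀m hlt.le
      have := est t htmem t₀ ht₀m hlt (fun x hx =>
        hgb x (by rw [min_eq_left hs']; exact hx.1) (by rw [max_eq_right hs']; exact hx.2))
      have heq : (h t - h t₀) / (t - t₀) = (h t₀ - h t) / (t₀ - t) := by
        rw [← neg_sub (h t₀), ← neg_sub t₀, neg_div_neg_eq]
      rwa [heq]
    · -- t₀ < t
      have hs' : s t₀ ≤ s t := hmono t₀ ht₀m t htmem hgt.le
      exact est t₀ ht₀m t htmem hgt (fun x hx =>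
        hgb x (by rw [min_eq_right hs']; exact hx.1) (by rw [max_eq_left hs']; exact hx.2))
  have hslope : slope h t₀ t = (h t - h t₀) / (t - t₀) := slope_def_field h t₀ t
  rw [Real.dist_eq, hslope]
  calc |(h t - h t₀) / (t - t₀) - g (s t₀)| ≤ ε/2 := hfinal
    _ < ε := by linarith
end

section
/- If the miscalibration has constant sign, i.e., g(z) − z ≥ 0 for μ-a.e. z ∈ [0,1] (or g(z) − z ≤ 0 for μ-a.e. z), where g(z) = P(Y = k | Z_k = z), then the KS error sup_{σ∈[0,1]} |P(Y=k, Z_k ≤ σ) − ∫_{[0,σ]} z dμ(z)| equals the expected calibration error ∫_{[0,1]} |g(z) − z| dμ(z), and the supremum is attained at σ = 1. -/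
open MeasureTheory Set

lemma biSup_Icc_eq_of_max {f : ℝ → ℝ} {C : ℝ} (hle : ∀ σ, f σ ≤ C) (hC : 0 ≤ C)
    (h1 : f 1 = C) : (⨆ σ ∈ Set.Icc (0:ℝ) 1, f σ) = C := by
  apply le_antisymm
  · exact Real.iSup_le (fun σ => Real.iSup_le (fun _ => hle σ) hC) hC
  · have hb : BddAbove (Set.range fun σ => ⨆ _ : σ ∈ Set.Icc (0:ℝ) 1, f σ) :=
      ⟨C, by rintro x ⟨σ, rfl⟩; exact Real.iSup_le (fun _ => hle σ) hC⟩
    have h1m : (1:ℝ) ∈ Set.Icc (0:ℝ) 1 := by norm_num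
    have hpos : (⨆ _ : (1:ℝ) ∈ Set.Icc (0:ℝ) 1, f 1) = f 1 := ciSup_pos h1m
    calc C = f 1 := h1.symm
      _ = ⨆ _ : (1:ℝ) ∈ Set.Icc (0:ℝ) 1, f 1 := hpos.symm
      _ ≤ _ := le_ciSup hb 1

/-- If the miscalibration has constant sign (`g(z) ≥ z` μ-a.e. or `g(z) ≤ z`
μ-a.e., where `g z = P(Y = k | Z_k = z)` is a density with respect to the law
`μ` of `Z_k`), then the KS error
`sup_{σ∈[0,1]} |P(Y = k ∧ Z_k ≤ σ) − ∫_{[0,σ]} z dμ|` equals the expected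
calibration error `∫_{[0,1]} |g z − z| dμ`, and the supremum is attained at
`σ = 1`. -/
theorem stmt6 {Ω : Type*} [MeasurableSpace Ω] (P : Measure Ω) [IsProbabilityMeasure P]
    (Zk : Ω → ℝ) (hZk : Measurable Zk) (hZ01 : ∀ ω, Zk ω ∈ Set.Icc (0 : ℝ) 1)
    (Y : Ω → ℕ) (hY : Measurable Y) (k : ℕ)
    (g : ℝ → ℝ) (hgm : Measurable g) (hgi : Integrable g (P.map Zk))
    (hg : ∀ A : Set ℝ, MeasurableSet A →
      (P {ω | Y ω = k ∧ Zk ω ∈ A}).toReal = ∫ σ in A, g σ ∂(P.map Zk))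
    (hsign : (∀ᵐ z ∂(P.map Zk), z ≤ g z) ∨ (∀ᵐ z ∂(P.map Zk), g z ≤ z)) :
    (⨆ σ ∈ Set.Icc (0 : ℝ) 1,
      |(P {ω | Y ω = k ∧ Zk ω ≤ σ}).toReal - ∫ z in Set.Icc 0 σ, z ∂(P.map Zk)|)
        = ∫ z in Set.Icc (0 : ℝ) 1, |g z - z| ∂(P.map Zk) ∧
    |(P {ω | Y ω = k ∧ Zk ω ≤ (1 : ℝ)}).toReal - ∫ z in Set.Icc (0 : ℝ) 1, z ∂(P.map Zk)|
        = ∫ z in Set.Icc (0 : ℝ) 1, |g z - z| ∂(P.map Zk) := by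
  set μ := P.map Zk with hμdef
  have hae : ∀ᵐ z ∂μ, z ∈ Set.Icc (0:ℝ) 1 :=
    (ae_map_iff hZk.aemeasurable measurableSet_Icc).2 (Filter.Eventually.of_forall hZ01)
  have hid : Integrable (fun z : ℝ => z) μ := by
    have : IsProbabilityMeasure μ := Measure.isProbabilityMeasure_map hZk.aemeasurable
    refine (integrable_const (1:ℝ)).mono' measurable_id.aestronglyMeasurable ?_
    filter_upwards [hae] with z hz
    rw [Real.norm_eq_abs, abs_le]
    exact ⟨le_trans (by norm_num) hz.1, hz.2⟩
  have hh : Integrable (fun z => g z - z) μ := hgi.sub hid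
  have hsetσ : ∀ σ : ℝ, Set.Icc (0:ℝ) σ =ᵐ[μ] Set.Iic σ := by
    intro σ
    filter_upwards [hae] with z hz
    have : (z ∈ Set.Icc (0:ℝ) σ) ↔ (z ∈ Set.Iic σ) := by simp [Set.mem_Icc, hz.1]
    exact eq_iff_iff.2 this
  have hIic1 : Set.Iic (1:ℝ) =ᵐ[μ] Set.univ := by
    filter_upwards [hae] with z hz
    have : (z ∈ Set.Iic (1:ℝ)) ↔ (z ∈ Set.univ) := by simp [hz.2]
    exact eq_iff_iff.2 this
  have huniv : Set.Icc (0:ℝ) 1 =ᵐ[μ] Set.univ := by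
    filter_upwards [hae] with z hz
    have : (z ∈ Set.Icc (0:ℝ) 1) ↔ (z ∈ Set.univ) := by simp [hz]
    exact eq_iff_iff.2 this
  have hF : ∀ σ : ℝ,
      (P {ω | Y ω = k ∧ Zk ω ≤ σ}).toReal - ∫ z in Set.Icc 0 σ, z ∂μ
        = ∫ z in Set.Iic σ, (g z - z) ∂μ := by
    intro σ
    have h1 : (P {ω | Y ω = k ∧ Zk ω ≤ σ}).toReal = ∫ z in Set.Iic σ, g z ∂μ :=
      hg (Set.Iic σ) measurableSet_Iic
    rw [h1, setIntegral_congr_set (hsetσ σ),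
      integral_sub hgi.integrableOn hid.integrableOn]
  have hC : (∫ z in Set.Icc (0:ℝ) 1, |g z - z| ∂μ) = ∫ z, |g z - z| ∂μ := by
    rw [setIntegral_congr_set huniv, setIntegral_univ]
  have hbound : ∀ σ : ℝ, |∫ z in Set.Iic σ, (g z - z) ∂μ| ≤ ∫ z, |g z - z| ∂μ := by
    intro σ
    calc |∫ z in Set.Iic σ, (g z - z) ∂μ| ≤ ∫ z in Set.Iic σ, |g z - z| ∂μ := by
          simpa [Real.norm_eq_abs] using
            norm_integral_le_integral_norm (μ := μ.restrict (Set.Iic σ)) (fun z => g z - z)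
      _ ≤ ∫ z, |g z - z| ∂μ :=
          setIntegral_le_integral hh.abs (Filter.Eventually.of_forall fun z => abs_nonneg _)
  have heq1 : |∫ z in Set.Iic (1:ℝ), (g z - z) ∂μ| = ∫ z, |g z - z| ∂μ := by
    rw [setIntegral_congr_set hIic1, setIntegral_univ]
    rcases hsign with hs | hs
    · rw [abs_of_nonneg (integral_nonneg_of_ae (by filter_upwards [hs] with z hz; simp only [Pi.zero_apply]; linarith))]
      refine integral_congr_ae ?_
      filter_upwards [hs] with z hz
      rw [abs_of_nonneg]; linarith
    · rw [abs_of_nonpos (integral_nonpos_of_ae (by filter_upwards [hs] with z hz; simp only [Pi.zero_apply]; linarith)),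
        ← integral_neg]
      refine integral_congr_ae ?_
      filter_upwards [hs] with z hz
      rw [abs_of_nonpos]; linarith
  have hCnn : 0 ≤ ∫ z, |g z - z| ∂μ := integral_nonneg fun z => abs_nonneg _
  have hf1 : |(P {ω | Y ω = k ∧ Zk ω ≤ (1:ℝ)}).toReal - ∫ z in Set.Icc (0:ℝ) 1, z ∂μ|
      = ∫ z, |g z - z| ∂μ := by rw [hF 1]; exact heq1
  constructor
  · rw [hC]
    exact biSup_Icc_eq_of_max (fun σ => by rw [hF σ]; exact hbound σ) hCnn hf1
  · rw [hC]; exact hf1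
end

section
/- If a classifier is calibrated in the multi-class sense (P(Y = k | Z = z) = z_k for all k), then it is also within-top-r calibrated: the conditional probability that the true label is among the top r predicted classes, given that the sum of the top r scores equals σ, is σ. -/
open MeasureTheory Set

lemma aux_density {α : Type*} [MeasurableSpace α] (μ : Measure α) [IsFiniteMeasure μ]
    (f : α → ℝ) (hf : Measurable f)
    (h : ∀ A : Set α, MeasurableSet A → 0 ≤ ∫ x in A, f x ∂μ ∧ ∫ x in A, f x ∂μ ≤ 1) :
    (∀ᵐ x ∂μ, 0 ≤ f x) ∧ Integrable f μ := by
  have hnonneg : ∀ᵐ x ∂μ, 0 ≤ f x := by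
    have hC : ∀ n : ℕ, μ (f ⁻¹' Set.Icc (-(n+1) : ℝ) (-(1/(n+1)))) = 0 := by
      intro n
      set C : Set α := f ⁻¹' Set.Icc (-(n+1) : ℝ) (-(1/(n+1))) with hCdef
      have hCm : MeasurableSet C := hf measurableSet_Icc
      have hpos : (0:ℝ) < 1/(n+1) := by positivity
      have hint : IntegrableOn f C μ := by
        apply Measure.integrableOn_of_bounded (M := (n+1 : ℝ)) (measure_ne_top μ C)
          hf.aestronglyMeasurable
        filter_upwards [ae_restrict_mem hCm] with x hx
        rw [Real.norm_eq_abs, abs_le]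
        exact ⟨hx.1, by linarith [hx.2]⟩
      have hmono : ∫ x in C, f x ∂μ ≤ ∫ _ in C, (-(1/(n+1)) : ℝ) ∂μ :=
        setIntegral_mono_on hint (integrableOn_const (measure_ne_top μ C))
          hCm (fun x hx => hx.2)
      rw [setIntegral_const, smul_eq_mul, measureReal_def] at hmono
      have h0 := (h C hCm).1
      have hμC : (μ C).toReal ≤ 0 := by
        by_contra hc
        push_neg at hc
        nlinarith [hmono, h0, mul_pos hc hpos]
      have : (μ C).toReal = 0 := le_antisymm hμC ENNReal.toReal_nonneg
      exact (ENNReal.toReal_eq_zero_iff _).1 this |>.resolve_right (measure_ne_top μ C)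
    have hsub : {x | f x < 0} ⊆ ⋃ n : ℕ, f ⁻¹' Set.Icc (-(n+1) : ℝ) (-(1/(n+1))) := by
      intro x hx
      simp only [Set.mem_setOf_eq] at hx
      obtain ⟨n, hn⟩ := exists_nat_ge (max (-f x) (1/(-f x)))
      have h1' : -f x ≤ (n:ℝ) := le_trans (le_max_left _ _) hn
      have h2' : 1/(-f x) ≤ (n:ℝ) := le_trans (le_max_right _ _) hn
      have h1 : -f x ≤ (n:ℝ) + 1 := by linarith
      have h2 : 1/(-f x) ≤ (n:ℝ) + 1 := by linarith
      have hfx : (0:ℝ) < -f x := by linarith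
      refine Set.mem_iUnion.2 ⟨n, ?_⟩
      simp only [Set.mem_preimage, Set.mem_Icc]
      constructor
      · linarith
      · have : 1/((n:ℝ)+1) ≤ -f x := by
          rw [div_le_iff₀ (by positivity)]
          rw [div_le_iff₀ hfx] at h2
          linarith
        linarith
    rw [ae_iff]
    refine measure_mono_null ?_ (measure_iUnion_null fun n => hC n)
    intro x hx
    simp only [Set.mem_setOf_eq, not_le] at hx
    exact hsub hx
  refine ⟨hnonneg, ⟨hf.aestronglyMeasurable, ?_⟩⟩
  rw [hasFiniteIntegral_iff_ofReal hnonneg]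
  set F : ℕ → α → ENNReal := fun n => (f ⁻¹' Set.Icc (0:ℝ) n).indicator
      (fun x => ENNReal.ofReal (f x)) with hFdef
  have hBm : ∀ n : ℕ, MeasurableSet (f ⁻¹' Set.Icc (0:ℝ) n) := fun n => hf measurableSet_Icc
  have hFmeas : ∀ n, Measurable (F n) :=
    fun n => (ENNReal.measurable_ofReal.comp hf).indicator (hBm n)
  have hFmono : Monotone F := by
    intro n m hnm
    exact Set.indicator_le_indicator_of_subset
      (Set.preimage_mono (Set.Icc_subset_Icc le_rfl (by exact_mod_cast hnm)))
      (fun _ => zero_le)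
  have hFsup : ∀ x, ⨆ n, F n x = ENNReal.ofReal (f x) := by
    intro x
    rcases le_or_gt 0 (f x) with hx | hx
    · obtain ⟨n, hn⟩ := exists_nat_ge (f x)
      apply le_antisymm
      · exact iSup_le fun m => Set.indicator_le_self _ _ x
      · refine le_iSup_of_le n ?_
        have hFn : F n x = ENNReal.ofReal (f x) :=
          Set.indicator_of_mem (by exact ⟨hx, hn⟩) _
        rw [hFn]
    · have : ∀ n, F n x = 0 := by
        intro n
        apply Set.indicator_of_notMem
        simp only [Set.mem_preimage, Set.mem_Icc, not_and]
        intro h0; linarith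
      simp [this, ENNReal.ofReal_eq_zero.2 hx.le]
  have key : ∫⁻ x, ENNReal.ofReal (f x) ∂μ = ⨆ n, ∫⁻ x, F n x ∂μ := by
    rw [← lintegral_iSup hFmeas hFmono]
    exact lintegral_congr fun x => (hFsup x).symm
  have hbound : ∀ n, ∫⁻ x, F n x ∂μ ≤ 1 := by
    intro n
    rw [hFdef]
    rw [lintegral_indicator (hBm n)]
    have hint : IntegrableOn f (f ⁻¹' Set.Icc (0:ℝ) n) μ := by
      apply Measure.integrableOn_of_bounded (M := (n : ℝ)) (measure_ne_top μ _)
        hf.aestronglyMeasurable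
      filter_upwards [ae_restrict_mem (hBm n)] with x hx
      rw [Real.norm_eq_abs, abs_le]
      exact ⟨by linarith [hx.1], hx.2⟩
    have hnn : 0 ≤ᵐ[μ.restrict (f ⁻¹' Set.Icc (0:ℝ) n)] f := by
      filter_upwards [ae_restrict_mem (hBm n)] with x hx using hx.1
    rw [← ofReal_integral_eq_lintegral_ofReal hint hnn]
    exact ENNReal.ofReal_le_one.2 (h _ (hBm n)).2
  rw [key]
  exact lt_of_le_of_lt (iSup_le hbound) ENNReal.one_lt_top


/-- If a classifier is multi-class calibrated (`P(Y = k | Z = z) = z k`,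
expressed as a density identity with respect to the law of `Z`), then it is
within-top-`r` calibrated: the probability that the true label is among the
top `r` predicted classes, conditional on the sum of the top `r` scores,
equals that sum (again expressed as a density identity with respect to the
law of the top-`r` score sum). Here `T z` is the (fixed, measurable) set of
indices of the `r` largest coordinates of `z`. -/
theorem stmt11 {Ω : Type*} [MeasurableSpace Ω] (P : Measure Ω) [IsProbabilityMeasure P]
    {K : ℕ} (Z : Ω → (Fin K → ℝ)) (hZ : Measurable Z) (Y : Ω → Fin K) (hY : Measurable Y)
    (r : ℕ) (T : (Fin K → ℝ) → Finset (Fin K))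
    (hTmeas : ∀ s : Finset (Fin K), MeasurableSet {z | T z = s})
    (hTcard : ∀ z, (T z).card = r)
    (hTtop : ∀ z, ∀ i ∈ T z, ∀ j ∉ T z, z j ≤ z i)
    (hcal : ∀ k : Fin K, ∀ A : Set (Fin K → ℝ), MeasurableSet A →
      (P {ω | Y ω = k ∧ Z ω ∈ A}).toReal = ∫ z in A, z k ∂(P.map Z)) :
    ∀ B : Set ℝ, MeasurableSet B →
      (P {ω | Y ω ∈ T (Z ω) ∧ (∑ j ∈ T (Z ω), Z ω j) ∈ B}).toReal
        = ∫ σ in B, σ ∂(P.map fun ω => ∑ j ∈ T (Z ω), Z ω j) := by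
  intro B hB
  set μ : Measure (Fin K → ℝ) := P.map Z with hμdef
  have hμprob : IsProbabilityMeasure μ := Measure.isProbabilityMeasure_map hZ.aemeasurable
  -- integrability of coordinates
  have hfk : ∀ k : Fin K, Integrable (fun z => z k) μ := by
    intro k
    refine (aux_density μ (fun z => z k) (measurable_pi_apply k) ?_).2
    intro A hA
    rw [← hcal k A hA]
    refine ⟨ENNReal.toReal_nonneg, ?_⟩
    calc (P {ω | Y ω = k ∧ Z ω ∈ A}).toReal
        ≤ (P Set.univ).toReal :=
          ENNReal.toReal_mono (measure_ne_top _ _) (measure_mono (Set.subset_univ _))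
      _ = 1 := by simp
  set S : (Fin K → ℝ) → ℝ := fun z => ∑ j ∈ T z, z j with hSdef
  have hSrep : S = fun z => ∑ s : Finset (Fin K),
      ({z | T z = s}).indicator (fun z => ∑ j ∈ s, z j) z := by
    funext z
    rw [Finset.sum_eq_single_of_mem (T z) (Finset.mem_univ _)]
    · exact (Set.indicator_of_mem (by exact rfl) _).symm
    · intro s _ hs
      apply Set.indicator_of_notMem
      intro h
      exact hs (show T z = s from h).symm
  have hsum_meas : ∀ s : Finset (Fin K), Measurable (fun z : Fin K → ℝ => ∑ j ∈ s, z j) :=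
    fun s => Finset.measurable_sum s (fun j _ => measurable_pi_apply j)
  have hSmeas : Measurable S := by
    rw [hSrep]
    exact Finset.measurable_sum _ (fun s _ => (hsum_meas s).indicator (hTmeas s))
  have hSint : Integrable S μ := by
    rw [hSrep]
    exact integrable_finset_sum _ (fun s _ =>
      (integrable_finset_sum s (fun j _ => hfk j)).indicator (hTmeas s))
  set A : Finset (Fin K) → Set (Fin K → ℝ) :=
    fun s => {z | T z = s} ∩ (fun z => ∑ j ∈ s, z j) ⁻¹' B with hAdef
  have hAmeas : ∀ s, MeasurableSet (A s) := fun s => (hTmeas s).inter ((hsum_meas s) hB)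
  -- rewrite the pushforward
  have hmap : (P.map fun ω => ∑ j ∈ T (Z ω), Z ω j) = μ.map S := by
    rw [hμdef, Measure.map_map hSmeas hZ]
    rfl
  rw [hmap]
  have hRHS : ∫ σ in B, σ ∂(μ.map S) = ∫ z in S ⁻¹' B, S z ∂μ :=
    setIntegral_map hB measurable_id.aestronglyMeasurable hSmeas.aemeasurable
  have hpre : S ⁻¹' B = ⋃ s ∈ (Finset.univ : Finset (Finset (Fin K))), A s := by
    ext z
    simp only [Set.mem_preimage, Set.mem_iUnion, Finset.mem_univ, exists_true_left,
      hAdef, Set.mem_inter_iff, Set.mem_setOf_eq, exists_prop, true_and]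
    constructor
    · intro hz
      exact ⟨T z, rfl, hz⟩
    · rintro ⟨s, hTz, hsum⟩
      have : S z = ∑ j ∈ s, z j := by rw [hSdef]; simp only [hTz]
      rwa [this]
  have hdisjA : Set.Pairwise (↑(Finset.univ : Finset (Finset (Fin K)))) (Function.onFun Disjoint A) := by
    intro s _ t _ hst
    rw [Function.onFun, Set.disjoint_left]
    intro z hzs hzt
    exact hst (hzs.1.symm.trans hzt.1)
  have hRHS2 : ∫ z in S ⁻¹' B, S z ∂μ
      = ∑ s : Finset (Fin K), ∑ k ∈ s, (P {ω | Y ω = k ∧ Z ω ∈ A s}).toReal := by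
    rw [hpre, integral_biUnion_finset Finset.univ (fun s _ => hAmeas s) hdisjA
      (fun s _ => hSint.integrableOn)]
    refine Finset.sum_congr rfl (fun s _ => ?_)
    rw [setIntegral_congr_fun (hAmeas s) (g := fun z => ∑ k ∈ s, z k)
      (fun z hz => by
        have h1 : T z = s := hz.1
        show (∑ j ∈ T z, z j) = ∑ k ∈ s, z k
        rw [h1]),
      integral_finset_sum s (fun k _ => (hfk k).integrableOn)]
    exact Finset.sum_congr rfl (fun k _ => (hcal k (A s) (hAmeas s)).symm)
  -- LHS decomposition
  have hEmeas : ∀ (s : Finset (Fin K)) (k : Fin K),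
      MeasurableSet {ω | Y ω = k ∧ Z ω ∈ A s} := by
    intro s k
    have : {ω | Y ω = k ∧ Z ω ∈ A s} = Y ⁻¹' {k} ∩ Z ⁻¹' (A s) := rfl
    rw [this]
    exact (hY (MeasurableSet.singleton k)).inter (hZ (hAmeas s))
  have hevent : {ω | Y ω ∈ T (Z ω) ∧ (∑ j ∈ T (Z ω), Z ω j) ∈ B}
      = ⋃ s ∈ (Finset.univ : Finset (Finset (Fin K))), ⋃ k ∈ s, {ω | Y ω = k ∧ Z ω ∈ A s} := by
    ext ω
    simp only [Set.mem_setOf_eq, Set.mem_iUnion, Finset.mem_univ, exists_prop, true_and,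
      hAdef, Set.mem_inter_iff, Set.mem_preimage]
    constructor
    · rintro ⟨hYT, hSB⟩
      exact ⟨T (Z ω), Y ω, hYT, rfl, rfl, hSB⟩
    · rintro ⟨s, k, hks, hYk, hTz, hsum⟩
      refine ⟨by rw [hTz, hYk]; exact hks, by rwa [hTz]⟩
  have hinner_disj : ∀ s : Finset (Fin K), Set.PairwiseDisjoint (↑s)
      (fun k => {ω | Y ω = k ∧ Z ω ∈ A s}) := by
    intro s k _ l _ hkl
    rw [Function.onFun, Set.disjoint_left]
    intro ω h1 h2
    exact hkl (h1.1.symm.trans h2.1)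
  have houter_disj : Set.PairwiseDisjoint (↑(Finset.univ : Finset (Finset (Fin K))))
      (fun s => ⋃ k ∈ s, {ω | Y ω = k ∧ Z ω ∈ A s}) := by
    intro s _ t _ hst
    rw [Function.onFun, Set.disjoint_left]
    intro ω h1 h2
    simp only [Set.mem_iUnion] at h1 h2
    obtain ⟨k, _, h1⟩ := h1
    obtain ⟨l, _, h2⟩ := h2
    exact hst (h1.2.1.symm.trans h2.2.1)
  rw [hevent, measure_biUnion_finset houter_disj
    (fun s _ => Finset.measurableSet_biUnion s (fun k _ => hEmeas s k)),
    ENNReal.toReal_sum (fun s _ => measure_ne_top _ _), hRHS, hRHS2]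
  refine Finset.sum_congr rfl (fun s _ => ?_)
  rw [measure_biUnion_finset (hinner_disj s) (fun k _ => hEmeas s k),
    ENNReal.toReal_sum (fun k _ => measure_ne_top _ _)]
end

section
/- If a classifier is multi-class calibrated, then for each r it is top-r calibrated: P(y^{(−r)} = 1 | f^{(−r)}(X) = σ) = σ for almost every σ, where f^{(−r)}(X) is the r-th largest score and y^{(−r)} = 1[Y equals the class achieving the r-th largest score]. -/
open MeasureTheory Set
open scoped ENNReal NNReal

/-- A measurable real function whose set integrals are all nonnegative and dominated by the
measure of the set is integrable (w.r.t. a finite measure). -/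
lemma aux_integrable {α : Type*} [MeasurableSpace α] (μ : Measure α) [IsFiniteMeasure μ]
    (f : α → ℝ) (hf : Measurable f)
    (h : ∀ A : Set α, MeasurableSet A →
      0 ≤ ∫ z in A, f z ∂μ ∧ ∫ z in A, f z ∂μ ≤ (μ A).toReal) :
    Integrable f μ := by
  -- Step 1 : the set where f is negative is null.
  have hneg : μ {z | f z < 0} = 0 := by
    have hcov : {z | f z < 0} ⊆ ⋃ m : ℕ, {z | f z ∈ Icc (-(m + 1 : ℝ)) (-(1 / (m + 1 : ℝ)))} := by
      intro z hz
      simp only [mem_setOf_eq] at hz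
      set c : ℝ := max (-f z) (1 / (-f z)) with hc
      have hc0 : 0 ≤ c := le_max_of_le_left (by linarith)
      refine mem_iUnion.2 ⟨⌈c⌉₊, ?_, ?_⟩
      · have : -f z ≤ c := le_max_left _ _
        have h2 : c ≤ (⌈c⌉₊ : ℝ) := Nat.le_ceil c
        linarith
      · have h1 : 1 / (-f z) ≤ c := le_max_right _ _
        have h2 : c ≤ (⌈c⌉₊ : ℝ) + 1 := by linarith [Nat.le_ceil c]
        have h3 : (0:ℝ) < -f z := by linarith
        have h4 : (0:ℝ) < (⌈c⌉₊ : ℝ) + 1 := by positivity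
        have h5 : 1 / ((⌈c⌉₊ : ℝ) + 1) ≤ -f z := by
          rw [div_le_iff₀ h4]
          rw [div_le_iff₀ h3] at h1
          nlinarith
        linarith
    refine measure_mono_null hcov (measure_iUnion_null fun m => ?_)
    set A : Set α := {z | f z ∈ Icc (-(m + 1 : ℝ)) (-(1 / (m + 1 : ℝ)))} with hA
    have hAm : MeasurableSet A := hf measurableSet_Icc
    have hint : IntegrableOn f A μ := by
      refine Measure.integrableOn_of_bounded (measure_ne_top μ A) hf.aestronglyMeasurable
        (M := m + 1) ?_
      refine (ae_restrict_iff' hAm).2 (ae_of_all _ fun z hz => ?_)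
      have h1 := hz.1
      have h2 := hz.2
      have hpos : (0:ℝ) < 1 / (m + 1 : ℝ) := by positivity
      rw [Real.norm_eq_abs, abs_le]
      constructor <;> nlinarith
    have h0 := (h A hAm).1
    have hle : ∫ z in A, f z ∂μ ≤ ∫ _ in A, (-(1 / (m + 1 : ℝ))) ∂μ := by
      refine setIntegral_mono_on hint (integrableOn_const (measure_ne_top μ A))
        hAm fun z hz => hz.2
    rw [setIntegral_const, smul_eq_mul] at hle
    have hpos : (0:ℝ) < 1 / (m + 1 : ℝ) := by positivity
    have : (μ A).toReal ≤ 0 := by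
      have hle' : ∫ z in A, f z ∂μ ≤ (μ A).toReal * -(1 / (m + 1 : ℝ)) := hle
      nlinarith
    have h2 : (μ A).toReal = 0 := le_antisymm this ENNReal.toReal_nonneg
    exact (ENNReal.toReal_eq_zero_iff _).1 h2 |>.resolve_right (measure_ne_top μ A)
  -- Step 2 : finite integral.
  refine ⟨hf.aestronglyMeasurable, ?_⟩
  rw [HasFiniteIntegral]
  show ∫⁻ z, (‖f z‖₊ : ℝ≥0∞) ∂μ < ⊤
  have hsplit : ∫⁻ z, (‖f z‖₊ : ℝ≥0∞) ∂μ
      = ∫⁻ z in {z | 0 ≤ f z}, (‖f z‖₊ : ℝ≥0∞) ∂μ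
        + ∫⁻ z in {z | 0 ≤ f z}ᶜ, (‖f z‖₊ : ℝ≥0∞) ∂μ := by
    exact (lintegral_add_compl _ (hf measurableSet_Ici : MeasurableSet {z | 0 ≤ f z})).symm
  have hcompl : {z | 0 ≤ f z}ᶜ = {z | f z < 0} := by
    ext z; simp [not_le]
  rw [hsplit, hcompl, setLIntegral_measure_zero _ _ hneg, add_zero]
  -- cover the nonnegative part by the sets  {n ≤ f < n+1}
  set D : ℕ → Set α := fun n => {z | f z ∈ Ico (n : ℝ) (n + 1)} with hD
  have hDm : ∀ n, MeasurableSet (D n) := fun n => hf measurableSet_Ico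
  have hDcov : {z | 0 ≤ f z} ⊆ ⋃ n, D n := by
    intro z hz
    exact mem_iUnion.2 ⟨⌊f z⌋₊, Nat.floor_le hz, Nat.lt_floor_add_one _⟩
  have hDdisj : Pairwise (Function.onFun Disjoint D) := by
    intro n m hnm
    refine Set.disjoint_left.2 fun z hzn hzm => hnm ?_
    have h1 := hzn.1; have h2 := hzn.2; have h3 := hzm.1; have h4 := hzm.2
    have ha : (n : ℝ) < m + 1 := lt_of_le_of_lt h1 h4
    have hb : (m : ℝ) < n + 1 := lt_of_le_of_lt h3 h2
    have ha' : n < m + 1 := by exact_mod_cast ha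
    have hb' : m < n + 1 := by exact_mod_cast hb
    omega
  calc ∫⁻ z in {z | 0 ≤ f z}, (‖f z‖₊ : ℝ≥0∞) ∂μ
      ≤ ∫⁻ z in ⋃ n, D n, (‖f z‖₊ : ℝ≥0∞) ∂μ :=
        lintegral_mono_set hDcov
    _ = ∑' n, ∫⁻ z in D n, (‖f z‖₊ : ℝ≥0∞) ∂μ := by
        rw [lintegral_iUnion hDm hDdisj]
    _ ≤ ∑' n, μ (D n) := by
        refine ENNReal.tsum_le_tsum fun n => ?_
        have hintn : IntegrableOn f (D n) μ := by
          refine Measure.integrableOn_of_bounded (measure_ne_top μ (D n))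
            hf.aestronglyMeasurable (M := n + 1) ?_
          refine (ae_restrict_iff' (hDm n)).2 (ae_of_all _ fun z hz => ?_)
          have h1 := hz.1; have h2 := hz.2
          rw [Real.norm_eq_abs, abs_le]
          have : (0:ℝ) ≤ n := Nat.cast_nonneg n
          constructor <;> linarith
        have hnn : ∀ z ∈ D n, 0 ≤ f z := fun z hz => le_trans (Nat.cast_nonneg n) hz.1
        have heq : ∫⁻ z in D n, (‖f z‖₊ : ℝ≥0∞) ∂μ = ∫⁻ z in D n, ENNReal.ofReal (f z) ∂μ := by
          refine setLIntegral_congr_fun (hDm n) fun z hz => ?_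
          exact Real.enorm_eq_ofReal (hnn z hz)
        rw [heq, ← ofReal_integral_eq_lintegral_ofReal hintn
          ((ae_restrict_iff' (hDm n)).2 (ae_of_all _ hnn))]
        calc ENNReal.ofReal (∫ z in D n, f z ∂μ)
            ≤ ENNReal.ofReal ((μ (D n)).toReal) := ENNReal.ofReal_le_ofReal (h (D n) (hDm n)).2
          _ = μ (D n) := ENNReal.ofReal_toReal (measure_ne_top μ (D n))
    _ = μ (⋃ n, D n) := (measure_iUnion hDdisj hDm).symm
    _ < ⊤ := measure_lt_top μ _

/-- If a classifier is multi-class calibrated, then for each `r` it is top-`r`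
calibrated: `P(y⁽⁻ʳ⁾ = 1 | f⁽⁻ʳ⁾(X) = σ) = σ` for a.e. `σ`, expressed as a
density identity with respect to the law of the `r`-th largest score
`f⁽⁻ʳ⁾(X) = Z (a Z)`, where `a z` is the (measurably tie-broken) index of the
`r`-th largest coordinate of `z`. -/
theorem stmt12 {Ω : Type*} [MeasurableSpace Ω] (P : Measure Ω) [IsProbabilityMeasure P]
    {K : ℕ} (Z : Ω → (Fin K → ℝ)) (hZ : Measurable Z) (Y : Ω → Fin K) (hY : Measurable Y)
    (r : ℕ) (hr : 1 ≤ r) (a : (Fin K → ℝ) → Fin K)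
    (hameas : ∀ i : Fin K, MeasurableSet {z | a z = i})
    (hrank : ∀ z : Fin K → ℝ,
      ((Finset.univ.filter fun j => z (a z) < z j).card < r) ∧
      (r ≤ (Finset.univ.filter fun j => z (a z) ≤ z j).card))
    (hcal : ∀ k : Fin K, ∀ A : Set (Fin K → ℝ), MeasurableSet A →
      (P {ω | Y ω = k ∧ Z ω ∈ A}).toReal = ∫ z in A, z k ∂(P.map Z)) :
    ∀ B : Set ℝ, MeasurableSet B →
      (P {ω | Y ω = a (Z ω) ∧ Z ω (a (Z ω)) ∈ B}).toReal
        = ∫ σ in B, σ ∂(P.map fun ω => Z ω (a (Z ω))) := by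
  intro B hB
  set μ : Measure (Fin K → ℝ) := P.map Z with hμ
  haveI : IsProbabilityMeasure μ := Measure.isProbabilityMeasure_map hZ.aemeasurable
  set g : (Fin K → ℝ) → ℝ := fun z => z (a z) with hg
  have hgmeas : Measurable g := by
    have hrepr : g = fun z => ∑ i : Fin K, if a z = i then z i else 0 := by
      funext z
      simp [hg]
    rw [hrepr]
    exact Finset.measurable_sum _ fun i _ =>
      Measurable.ite (hameas i) (measurable_pi_apply i) measurable_const
  -- integrability of coordinate functions
  have hint : ∀ i : Fin K, Integrable (fun z => z i) μ := by
    intro i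
    refine aux_integrable μ _ (measurable_pi_apply i) fun A hA => ?_
    constructor
    · rw [← hcal i A hA]
      exact ENNReal.toReal_nonneg
    · rw [← hcal i A hA]
      refine ENNReal.toReal_mono (measure_ne_top μ A) ?_
      have : {ω | Y ω = i ∧ Z ω ∈ A} ⊆ Z ⁻¹' A := fun ω hω => hω.2
      calc P {ω | Y ω = i ∧ Z ω ∈ A} ≤ P (Z ⁻¹' A) := measure_mono this
        _ = μ A := (Measure.map_apply hZ hA).symm
  -- the pieces
  set A : Fin K → Set (Fin K → ℝ) := fun i => {z | a z = i} ∩ ((fun z => z i) ⁻¹' B) with hAdef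
  have hAm : ∀ i, MeasurableSet (A i) := fun i => (hameas i).inter ((measurable_pi_apply i) hB)
  have hAdisj : Set.Pairwise (Finset.univ : Finset (Fin K)) (Function.onFun Disjoint A) := by
    intro i _ j _ hij
    refine Set.disjoint_left.2 fun z hzi hzj => hij ?_
    rw [← hzi.1, ← hzj.1]
  have hpre : g ⁻¹' B = ⋃ i ∈ (Finset.univ : Finset (Fin K)), A i := by
    ext z
    simp only [mem_preimage, mem_iUnion, Finset.mem_univ, iUnion_true, hAdef, mem_inter_iff,
      mem_setOf_eq]
    constructor
    · intro hz
      exact ⟨a z, rfl, hz⟩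
    · rintro ⟨i, hi, hzB⟩
      simpa [hg, hi] using hzB
  -- law of the top score
  have hmap : (P.map fun ω => Z ω (a (Z ω))) = μ.map g := by
    rw [hμ, Measure.map_map hgmeas hZ]
    rfl
  -- rewrite the RHS as an integral over the preimage
  have hRHS : ∫ σ in B, σ ∂(P.map fun ω => Z ω (a (Z ω))) = ∫ z in g ⁻¹' B, g z ∂μ := by
    rw [hmap]
    exact setIntegral_map hB aestronglyMeasurable_id hgmeas.aemeasurable
  -- split the integral
  have hgiA : ∀ i : Fin K, IntegrableOn g (A i) μ := by
    intro i
    refine (IntegrableOn.congr_fun ((hint i).integrableOn) ?_ (hAm i))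
    intro z hz
    have hzi : a z = i := hz.1
    simp [hg, hzi]
  have hsplitInt : ∫ z in g ⁻¹' B, g z ∂μ = ∑ i : Fin K, ∫ z in A i, g z ∂μ := by
    rw [hpre]
    exact integral_biUnion_finset _ (fun i _ => hAm i) hAdisj fun i _ => hgiA i
  have hpieceInt : ∀ i : Fin K, ∫ z in A i, g z ∂μ = (P {ω | Y ω = i ∧ Z ω ∈ A i}).toReal := by
    intro i
    have : ∫ z in A i, g z ∂μ = ∫ z in A i, z i ∂μ := by
      refine setIntegral_congr_fun (hAm i) fun z hz => ?_
      have hzi : a z = i := hz.1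
      simp [hg, hzi]
    rw [this, ← hcal i (A i) (hAm i)]
  -- split the LHS measure
  have hLHSset : {ω | Y ω = a (Z ω) ∧ Z ω (a (Z ω)) ∈ B}
      = ⋃ i : Fin K, {ω | Y ω = i ∧ Z ω ∈ A i} := by
    ext ω
    simp only [mem_setOf_eq, mem_iUnion, hAdef, mem_inter_iff, mem_preimage]
    constructor
    · rintro ⟨hy, hb⟩
      exact ⟨a (Z ω), hy, rfl, by rwa [← hy] at hb ⊢⟩
    · rintro ⟨i, hy, hi, hb⟩
      refine ⟨by rw [hy, hi], ?_⟩
      rwa [hi]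
  have hEm : ∀ i : Fin K, MeasurableSet {ω | Y ω = i ∧ Z ω ∈ A i} := by
    intro i
    have : {ω | Y ω = i ∧ Z ω ∈ A i} = Y ⁻¹' {i} ∩ Z ⁻¹' (A i) := by
      ext ω; simp [mem_preimage]
    rw [this]
    exact (hY (measurableSet_singleton i)).inter (hZ (hAm i))
  have hEdisj : Pairwise (Function.onFun Disjoint fun i => {ω | Y ω = i ∧ Z ω ∈ A i}) := by
    intro i j hij
    refine Set.disjoint_left.2 fun ω hωi hωj => hij ?_
    rw [← hωi.1, ← hωj.1]
  have hLHS : (P {ω | Y ω = a (Z ω) ∧ Z ω (a (Z ω)) ∈ B}).toReal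
      = ∑ i : Fin K, (P {ω | Y ω = i ∧ Z ω ∈ A i}).toReal := by
    rw [hLHSset, measure_iUnion hEdisj hEm, tsum_fintype]
    exact ENNReal.toReal_sum fun i _ => measure_ne_top P _
  rw [hLHS, hRHS, hsplitInt]
  exact Finset.sum_congr rfl fun i _ => (hpieceInt i).symm
end
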